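/- The block circulant matrix bcirc(T) of a tensor T ∈ ℝ^{n×m×s} is block diagonalized by the discrete Fourier transform: (F_s ⊗ I_n) · bcirc(T) · (F_s ⊗ I_m)^* is a block diagonal matrix with s diagonal blocks of size n×m, where the j-th block is the j-th component of the discrete Fourier transform (along the third mode) of the frontal slices of T. -/

import Mathlib

open Matrix Complex

/-- A third-order tensor with `s` frontal slices of size `n × m`. -/
abbrev Tensor3 (n m s : ℕ) (R : Type*) := ZMod s → Matrix (Fin n) (Fin m) R

/-- Block circulant matrix of a third-order tensor: the `(i,j)` block is slice `i - j`. -/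
def bcirc {n m s : ℕ} {R : Type*} (T : Tensor3 n m s R) :
    Matrix (ZMod s × Fin n) (ZMod s × Fin m) R :=
  fun ia jb => T (ia.1 - jb.1) ia.2 jb.2

/-- Unfold a tensor by stacking its frontal slices vertically. -/
def unfold {m r s : ℕ} {R : Type*} (S : Tensor3 m r s R) :
    Matrix (ZMod s × Fin m) (Fin r) R :=
  fun ia b => S ia.1 ia.2 b

/-- The T-product: `fold (bcirc T * unfold S)`. -/
def tProd {n m r s : ℕ} [NeZero s] (T : Tensor3 n m s ℝ) (S : Tensor3 m r s ℝ) :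
    Tensor3 n r s ℝ :=
  fun k a b => (bcirc T * unfold S) (k, a) b

/-- The T-identity tensor: first frontal slice is the identity, the rest are zero. -/
def tId {n s : ℕ} : Tensor3 n n s ℝ :=
  fun k => if k = 0 then 1 else 0

/-- The T-transpose: transpose each frontal slice and reverse the order of slices 2..s. -/
def ttrans {n m s : ℕ} {R : Type*} (T : Tensor3 n m s R) : Tensor3 m n s R :=
  fun k => (T (-k))ᵀ

/-- The unitary discrete Fourier transform matrix of size `s`. -/
noncomputable def dft (s : ℕ) : Matrix (ZMod s) (ZMod s) ℂ :=
  fun j k => Complex.exp (-2 * Real.pi * Complex.I * (j.val * k.val) / s) / Real.sqrt s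

/-- The `j`-th Fourier-domain block of a tensor: the `j`-th component of the DFT of the
frontal slices along the third mode. -/
noncomputable def fourierBlock {n m s : ℕ} [NeZero s]
    (T : Tensor3 n m s ℂ) (j : ZMod s) : Matrix (Fin n) (Fin m) ℂ :=
  ∑ k : ZMod s, Complex.exp (-2 * Real.pi * Complex.I * (j.val * k.val) / s) • T k

/-- Block diagonal matrix with blocks `B j`. -/
def blkdiag {n m s : ℕ} [DecidableEq (ZMod s)] (B : ZMod s → Matrix (Fin n) (Fin m) ℂ) :
    Matrix (ZMod s × Fin n) (ZMod s × Fin m) ℂ :=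
  fun ia jb => if ia.1 = jb.1 then B ia.1 ia.2 jb.2 else 0

noncomputable def zet (s : ℕ) : ℂ := Complex.exp (-2 * Real.pi * Complex.I / s)
lemma zet_eq_inv (s : ℕ) : zet s = (Complex.exp (2 * Real.pi * Complex.I / s))⁻¹ := by
  rw [zet, ← Complex.exp_neg]; ring_nf
lemma isPrim (s : ℕ) [NeZero s] : IsPrimitiveRoot (zet s) s := by
  rw [zet_eq_inv]; exact (Complex.isPrimitiveRoot_exp s (NeZero.ne s)).inv
lemma zet_pow_s (s : ℕ) [NeZero s] : zet s ^ s = 1 := (isPrim s).pow_eq_one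
lemma exp_eq_zet (s : ℕ) (x : ℕ) :
    Complex.exp (-2 * Real.pi * Complex.I * x / s) = zet s ^ x := by
  rw [zet, ← Complex.exp_nat_mul]; ring_nf
lemma zet_pow_mod (s : ℕ) [NeZero s] (x : ℕ) : zet s ^ (x % s) = zet s ^ x := by
  conv_rhs => rw [← Nat.mod_add_div x s, pow_add, pow_mul, zet_pow_s, one_pow, mul_one]

noncomputable def ee {s : ℕ} (a : ZMod s) : ℂ := zet s ^ a.val

lemma ee_add {s : ℕ} [NeZero s] (a b : ZMod s) : ee (a + b) = ee a * ee b := by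
  rw [ee, ee, ee, ZMod.val_add, zet_pow_mod, pow_add]

lemma ee_mul_val {s : ℕ} [NeZero s] (a b : ZMod s) : zet s ^ (a.val * b.val) = ee (a * b) := by
  rw [ee, ZMod.val_mul, zet_pow_mod]

lemma ee_zero {s : ℕ} [NeZero s] : ee (0 : ZMod s) = 1 := by
  simp [ee, ZMod.val_zero]

lemma ee_neg {s : ℕ} [NeZero s] (a : ZMod s) : ee (-a) = (ee a)⁻¹ := by
  have h : ee a * ee (-a) = 1 := by rw [← ee_add]; simp [ee_zero]
  exact (inv_eq_of_mul_eq_one_right h).symm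

lemma conj_ee {s : ℕ} [NeZero s] (a : ZMod s) : (starRingEnd ℂ) (ee a) = ee (-a) := by
  rw [ee_neg]; unfold ee; rw [map_pow, ← inv_pow]
  congr 1
  rw [zet, ← Complex.exp_conj, ← Complex.exp_neg]
  have h2 : (starRingEnd ℂ) (-2 * Real.pi * Complex.I / s) = -(-2 * Real.pi * Complex.I / s) := by
    simp [map_div₀, map_ofNat]
    ring
  rw [h2]

lemma ee_ne_one {s : ℕ} [NeZero s] {a : ZMod s} (ha : a ≠ 0) : ee a ≠ 1 := by
  have h1 : 0 < a.val :=
    Nat.pos_of_ne_zero (fun h => ha ((ZMod.val_eq_zero a).mp h))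
  exact (isPrim s).pow_ne_one_of_pos_of_lt h1.ne' (ZMod.val_lt a)

lemma sum_ee {s : ℕ} [NeZero s] (d : ZMod s) :
    ∑ p : ZMod s, ee (d * p) = if d = 0 then (s : ℂ) else 0 := by
  split_ifs with h
  · simp [h, ee_zero, Finset.card_univ, ZMod.card]
  · have key : ee d * ∑ p : ZMod s, ee (d * p) = ∑ p : ZMod s, ee (d * p) := by
      rw [Finset.mul_sum]
      exact Fintype.sum_equiv (Equiv.addRight (1 : ZMod s)) _ _ (by
        intro p; simp [← ee_add, mul_add, mul_one, add_comm])
    have h2 : (ee d - 1) * ∑ p : ZMod s, ee (d * p) = 0 := by linear_combination key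
    rcases mul_eq_zero.mp h2 with h3 | h3
    · exact absurd (sub_eq_zero.mp h3) (ee_ne_one h)
    · exact h3

open Kronecker in
/-- `bcirc T` is block diagonalized by the DFT:
`(F_s ⊗ I_n) · bcirc T · (F_s ⊗ I_m)^*` is block diagonal with `j`-th block the `j`-th
DFT component of the frontal slices of `T`. -/
theorem dft_block_diagonalizes_bcirc {n m s : ℕ} [NeZero s] (T : Tensor3 n m s ℝ) :
    (dft s ⊗ₖ (1 : Matrix (Fin n) (Fin n) ℂ)) * (bcirc T).map Complex.ofReal *
      (dft s ⊗ₖ (1 : Matrix (Fin m) (Fin m) ℂ))ᴴ =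
    blkdiag (fourierBlock (fun k => (T k).map Complex.ofReal)) := by
  have hdft : ∀ (j k : ZMod s), dft s j k = ee (j * k) / (Real.sqrt s : ℝ) := by
    intro j k
    rw [dft, show ((j.val : ℂ) * (k.val : ℂ)) = ((j.val * k.val : ℕ) : ℂ) by push_cast; ring,
      exp_eq_zet, ee_mul_val]
  ext ⟨j, a⟩ ⟨l, b⟩
  simp only [mul_apply, conjTranspose_apply, kroneckerMap_apply, Matrix.map_apply,
    hdft, one_apply, Fintype.sum_prod_type, bcirc, mul_ite, ite_mul, mul_zero, zero_mul,
    mul_one, one_mul, apply_ite (star : ℂ → ℂ), star_zero, Finset.sum_ite_eq, Finset.sum_ite_eq',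
    Finset.mem_univ, if_true]
  have hexp : ∀ (j k : ZMod s),
      Complex.exp (-2 * Real.pi * Complex.I * ((j.val : ℂ) * (k.val : ℂ)) / s) = ee (j * k) := by
    intro j k
    rw [show ((j.val : ℂ) * (k.val : ℂ)) = ((j.val * k.val : ℕ) : ℂ) by push_cast; ring,
      exp_eq_zet, ee_mul_val]
  have hs : (s : ℂ) ≠ 0 := Nat.cast_ne_zero.mpr (NeZero.ne s)
  have c2 : ((Real.sqrt s : ℝ) : ℂ) * ((Real.sqrt s : ℝ) : ℂ) = (s : ℂ) := by
    rw [← Complex.ofReal_mul, Real.mul_self_sqrt (Nat.cast_nonneg s)]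
    simp
  have c0 : ((Real.sqrt s : ℝ) : ℂ) ≠ 0 := by
    intro h
    rw [h, zero_mul] at c2
    exact hs c2.symm
  have hstar : ∀ d : ZMod s, star (ee d / ((Real.sqrt s : ℝ) : ℂ)) =
      ee (-d) / ((Real.sqrt s : ℝ) : ℂ) := by
    intro d
    rw [star_div₀, RCLike.star_def, conj_ee, Complex.conj_ofReal]
  simp only [hstar]
  trans (∑ q : ZMod s, ee (j * q) * (T q a b : ℂ)) * (∑ p : ZMod s, ee ((j - l) * p)) / (s : ℂ)
  · have expand : (∑ q : ZMod s, ee (j * q) * (T q a b : ℂ)) *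
        (∑ p : ZMod s, ee ((j - l) * p)) / (s : ℂ) =
        ∑ p : ZMod s, ∑ q : ZMod s, ee (j * q) * (T q a b : ℂ) * ee ((j - l) * p) / (s : ℂ) := by
      rw [Finset.sum_mul_sum, Finset.sum_comm, Finset.sum_div]
      simp only [Finset.sum_div]
    rw [expand]
    refine Finset.sum_congr rfl (fun p _ => ?_)
    rw [Finset.sum_mul]
    refine (Fintype.sum_equiv (Equiv.addRight p) _ _ (fun q => ?_)).symm
    simp only [Equiv.coe_addRight, add_sub_cancel_right]
    have h1 : ee (j * (q + p)) = ee (j * q) * ee (j * p) := by rw [mul_add, ee_add]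
    have h2 : ee ((j - l) * p) = ee (j * p) * ee (-(l * p)) := by
      rw [sub_mul, sub_eq_add_neg, ee_add]
    rw [h1, h2, ← c2]
    field_simp
  · rw [sum_ee]
    by_cases hjl : j = l
    · subst hjl
      rw [sub_self, if_pos rfl, mul_div_assoc, div_self hs, mul_one]
      simp only [blkdiag, fourierBlock, Matrix.sum_apply, Matrix.smul_apply,
        smul_eq_mul, Matrix.map_apply, hexp, if_true, eq_self_iff_true]
    · rw [if_neg (sub_ne_zero.mpr hjl), mul_zero, zero_div, blkdiag,
        if_neg hjl]
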